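/- arXiv:2011.04419 — 2 statements merged into one kernel-verified Lean document; each statement's English description precedes it below -/
import Mathlib

section
/- Let h : ℝ^d → ℝ^m satisfy h(z) ≠ 0 for all z ∈ ℝ^d, and define sim[q, q'] := qᵀq'/(‖q‖·‖q'‖). Let D be a probability distribution over (x, y) ∈ ℝ^d × {0,1} in which both labels occur with positive probability, with input marginal D_x and class-conditional input distributions D₀, D₁; let D_{x̃} be a probability measure on ℝ^d, D_α a probability measure on ℝ, and δ : ℝ^d × ℝ^d → ℝ^d a map. With independent draws x̃, x̃', x̃'' ∼ D_{x̃} and α, α', α'' ∼ D_α, set x⁺ := x + α·δ(x, x̃), x⁺⁺ := x + α'·δ(x, x̃'), x⁻ := x̄ + α''·δ(x̄, x̃''). Let ρ̄(y) := Pr_{(x', y') ∼ D}(y' ≠ y). For y ∈ {0,1} define π_{y,y'}(a, b) := a if y = y' and := b otherwise, w̃ := ‖h(x⁺)‖^{-1}·( ‖h(π_{y,1}(x⁺⁺, x⁻))‖^{-1}·h(π_{y,1}(x⁺⁺, x⁻)) − ‖h(π_{y,0}(x⁺⁺, x⁻))‖^{-1}·h(π_{y,0}(x⁺⁺, x⁻))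 ), and f(x⁺) := h(x⁺)ᵀ w̃. Then, assuming all the expectations below are finite, E_{x, x̄ ∼ D_x; x̃, x̃', x̃'' ∼ D_{x̃}; α, α', α'' ∼ D_α}[ ℓ_cont(x⁺, x⁺⁺, x⁻) ] = E_{(x, y) ∼ D; x̄ ∼ D_{1−y}; x̃, x̃', x̃'' ∼ D_{x̃}; α, α', α'' ∼ D_α}[ ρ̄(y)·ℓ( f(x⁺), y ) ] + E_y[ (1 − ρ̄(y))·ℰ_y ], where ℰ_y := E_{x, x̄ ∼ D_y; x̃, x̃', x̃'' ∼ D_{x̃}; α, α', α'' ∼ D_α}[ log( 1 + exp( −(h(x⁺)/‖h(x⁺)‖)ᵀ( h(x⁺⁺)/‖h(x⁺⁺)‖ − h(x⁻)/‖h(x⁻)‖ ) ) ) ]. -/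
open MeasureTheory
open scoped RealInnerProductSpace

/-- The binary cross-entropy loss. -/
noncomputable def bce (q y : ℝ) : ℝ :=
  -y * Real.log (1 / (1 + Real.exp (-q))) -
    (1 - y) * Real.log (1 - 1 / (1 + Real.exp (-q)))

/-- Normalized cosine similarity `sim[q,q'] = qᵀq'/(‖q‖·‖q'‖)`. -/
noncomputable def simN {m : ℕ} (q q' : EuclideanSpace ℝ (Fin m)) : ℝ :=
  ⟪q, q'⟫ / (‖q‖ * ‖q'‖)

/-- The contrastive loss with normalized similarity. -/
noncomputable def lcontN {d m : ℕ} (h : (Fin d → ℝ) → EuclideanSpace ℝ (Fin m))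
    (xp xpp xm : Fin d → ℝ) : ℝ :=
  -Real.log (Real.exp (simN (h xp) (h xpp)) /
    (Real.exp (simN (h xp) (h xpp)) + Real.exp (simN (h xp) (h xm))))

/-- The classification loss `ℓ(f(x⁺), y)` with `f(x⁺) := h(x⁺)ᵀ w̃`,
`w̃ := ‖h(x⁺)‖⁻¹·( ‖h(π_{y,1})‖⁻¹·h(π_{y,1}) − ‖h(π_{y,0})‖⁻¹·h(π_{y,0}) )`, where
`π_{y,1} = x⁺⁺, π_{y,0} = x⁻` if `y = 1` and `π_{y,1} = x⁻, π_{y,0} = x⁺⁺` if `y = 0`. -/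
noncomputable def clsN {d m : ℕ} (h : (Fin d → ℝ) → EuclideanSpace ℝ (Fin m))
    (y : ℝ) (xp xpp xm : Fin d → ℝ) : ℝ :=
  let a := if y = 1 then xpp else xm
  let b := if y = 1 then xm else xpp
  let wt : EuclideanSpace ℝ (Fin m) := ‖h xp‖⁻¹ • (‖h a‖⁻¹ • h a - ‖h b‖⁻¹ • h b)
  bce ⟪h xp, wt⟫ y

/-- `log(1 + exp(−(h(x⁺)/‖h(x⁺)‖)ᵀ( h(x⁺⁺)/‖h(x⁺⁺)‖ − h(x⁻)/‖h(x⁻)‖ )))`. -/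
noncomputable def etermN {d m : ℕ} (h : (Fin d → ℝ) → EuclideanSpace ℝ (Fin m))
    (xp xpp xm : Fin d → ℝ) : ℝ :=
  Real.log (1 + Real.exp
    (-⟪‖h xp‖⁻¹ • h xp, ‖h xpp‖⁻¹ • h xpp - ‖h xm‖⁻¹ • h xm⟫))

/-- Sample space for `(x, x̄, x̃, x̃', x̃'', α, α', α'')`. -/
abbrev Omega8 (d : ℕ) : Type :=
  (Fin d → ℝ) × (Fin d → ℝ) × (Fin d → ℝ) × (Fin d → ℝ) × (Fin d → ℝ) × ℝ × ℝ × ℝ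

/-- The joint law of `(x, x̄, x̃, x̃', x̃'', α, α', α'')` with `x ∼ A`, `x̄ ∼ B`,
`x̃, x̃', x̃'' ∼ Dxt` and `α, α', α'' ∼ Da`, all independent. -/
noncomputable def prodD {d : ℕ} (A B Dxt : Measure (Fin d → ℝ)) (Da : Measure ℝ) :
    Measure (Omega8 d) :=
  A.prod (B.prod (Dxt.prod (Dxt.prod (Dxt.prod (Da.prod (Da.prod Da))))))

/-- `x⁺ := x + α·δ(x, x̃)`. -/
def XP8 {d : ℕ} (δ : (Fin d → ℝ) → (Fin d → ℝ) → (Fin d → ℝ)) (p : Omega8 d) : Fin d → ℝ :=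
  p.1 + p.2.2.2.2.2.1 • δ p.1 p.2.2.1

/-- `x⁺⁺ := x + α'·δ(x, x̃')`. -/
def XPP8 {d : ℕ} (δ : (Fin d → ℝ) → (Fin d → ℝ) → (Fin d → ℝ)) (p : Omega8 d) : Fin d → ℝ :=
  p.1 + p.2.2.2.2.2.2.1 • δ p.1 p.2.2.2.1

/-- `x⁻ := x̄ + α''·δ(x̄, x̃'')`. -/
def XM8 {d : ℕ} (δ : (Fin d → ℝ) → (Fin d → ℝ) → (Fin d → ℝ)) (p : Omega8 d) : Fin d → ℝ :=
  p.2.1 + p.2.2.2.2.2.2.2 • δ p.2.1 p.2.2.2.2.1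

lemma smul_prod' {α β : Type*} [MeasurableSpace α] [MeasurableSpace β]
    (c : ENNReal) (μ : Measure α) (ν : Measure β) [SFinite μ] [SFinite ν] :
    (c • μ).prod ν = c • μ.prod ν := by
  ext s hs
  rw [Measure.smul_apply, Measure.prod_apply hs, Measure.prod_apply hs,
    lintegral_smul_measure, smul_eq_mul]

lemma prod_smul' {α β : Type*} [MeasurableSpace α] [MeasurableSpace β]
    (c : ENNReal) (μ : Measure α) (ν : Measure β) [SFinite μ] [SFinite ν] :
    μ.prod (c • ν) = c • μ.prod ν := by
  ext s hs
  rw [Measure.smul_apply, Measure.prod_apply hs, Measure.prod_apply hs, smul_eq_mul,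
    ← lintegral_const_mul c (measurable_measure_prodMk_left hs)]
  simp [Measure.smul_apply]

lemma neg_log_frac (a b : ℝ) :
    -Real.log (Real.exp a / (Real.exp a + Real.exp b)) = Real.log (1 + Real.exp (b - a)) := by
  have hpos : (0:ℝ) < Real.exp a + Real.exp b := by positivity
  have h1 : (1:ℝ) + Real.exp (b - a) = (Real.exp a + Real.exp b) / Real.exp a := by
    rw [Real.exp_sub]; field_simp
  rw [h1, Real.log_div (Real.exp_ne_zero a) hpos.ne', Real.log_div hpos.ne' (Real.exp_ne_zero a)]
  ring

lemma bce_one (q : ℝ) : bce q 1 = Real.log (1 + Real.exp (-q)) := by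
  have hpos : (0:ℝ) < 1 + Real.exp (-q) := by positivity
  unfold bce
  rw [Real.log_div one_ne_zero hpos.ne']
  simp

lemma bce_zero (q : ℝ) : bce q 0 = Real.log (1 + Real.exp q) := by
  have hpos : (0:ℝ) < 1 + Real.exp (-q) := by positivity
  have h1 : (1:ℝ) - 1 / (1 + Real.exp (-q)) = Real.exp (-q) / (1 + Real.exp (-q)) := by
    field_simp
    ring
  have h2 : (1:ℝ) + Real.exp q = (1 + Real.exp (-q)) * Real.exp q := by
    rw [add_mul, ← Real.exp_add]; simp [add_comm]
  unfold bce
  rw [h1, Real.log_div (Real.exp_ne_zero _) hpos.ne', h2,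
    Real.log_mul hpos.ne' (Real.exp_ne_zero _)]
  simp

section Pointwise
variable {d m : ℕ} (h : (Fin d → ℝ) → EuclideanSpace ℝ (Fin m))
  (xp xpp xm : Fin d → ℝ)

lemma inner_key (hh : ∀ z, h z ≠ 0) :
    ⟪h xp, (‖h xp‖⁻¹ : ℝ) • (‖h xpp‖⁻¹ • h xpp - ‖h xm‖⁻¹ • h xm)⟫
      = simN (h xp) (h xpp) - simN (h xp) (h xm) := by
  have np : ‖h xp‖ ≠ 0 := norm_ne_zero_iff.mpr (hh xp)
  have npp : ‖h xpp‖ ≠ 0 := norm_ne_zero_iff.mpr (hh xpp)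
  have nm : ‖h xm‖ ≠ 0 := norm_ne_zero_iff.mpr (hh xm)
  rw [real_inner_smul_right, inner_sub_right, real_inner_smul_right, real_inner_smul_right]
  unfold simN
  set A := ⟪h xp, h xpp⟫ with hA
  set B := ⟪h xp, h xm⟫ with hB
  field_simp

lemma inner_key2 (hh : ∀ z, h z ≠ 0) :
    ⟪(‖h xp‖⁻¹ : ℝ) • h xp, ‖h xpp‖⁻¹ • h xpp - ‖h xm‖⁻¹ • h xm⟫
      = simN (h xp) (h xpp) - simN (h xp) (h xm) := by
  rw [real_inner_smul_left, ← real_inner_smul_right]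
  exact inner_key h xp xpp xm hh

lemma lcont_eq : lcontN h xp xpp xm
    = Real.log (1 + Real.exp (-(simN (h xp) (h xpp) - simN (h xp) (h xm)))) := by
  unfold lcontN
  rw [neg_log_frac]
  ring_nf

lemma cls_one_eq (hh : ∀ z, h z ≠ 0) : clsN h 1 xp xpp xm = lcontN h xp xpp xm := by
  unfold clsN
  simp only [eq_self_iff_true, if_true]
  rw [inner_key h xp xpp xm hh, bce_one, lcont_eq]

lemma cls_zero_eq (hh : ∀ z, h z ≠ 0) : clsN h 0 xp xpp xm = lcontN h xp xpp xm := by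
  unfold clsN
  simp only [if_neg (by norm_num : (0:ℝ) ≠ 1)]
  rw [inner_key h xp xm xpp hh, bce_zero, lcont_eq]
  ring_nf

lemma eterm_eq (hh : ∀ z, h z ≠ 0) : etermN h xp xpp xm = lcontN h xp xpp xm := by
  unfold etermN
  rw [inner_key2 h xp xpp xm hh, lcont_eq]

end Pointwise

/-- Theorem 1 of the paper. The label `y ∈ {0,1}` takes value `1` with probability `p1 ∈ (0,1)`;
the class-conditional input laws are `D1, D0`, and the input marginal is the mixture
`Dx = p1·D1 + (1−p1)·D0`, so `ρ̄(1) = 1 − p1` and `ρ̄(0) = p1`.  The expected contrastive loss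
(over `x, x̄ ∼ Dx` and the noise variables) equals
`E_{(x,y)∼D, x̄∼D_{1−y}}[ρ̄(y)·ℓ(f(x⁺),y)] + E_y[(1 − ρ̄(y))·ℰ_y]`, written out by expanding the
expectation over the two-point label distribution. -/
theorem stmt6 {d m : ℕ}
    (h : (Fin d → ℝ) → EuclideanSpace ℝ (Fin m)) (hh : ∀ z, h z ≠ 0)
    (D0 D1 Dxt : Measure (Fin d → ℝ)) (Da : Measure ℝ)
    [IsProbabilityMeasure D0] [IsProbabilityMeasure D1] [IsProbabilityMeasure Dxt]
    [IsProbabilityMeasure Da]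
    (p1 : ℝ) (hp0 : 0 < p1) (hp1 : p1 < 1)
    (δ : (Fin d → ℝ) → (Fin d → ℝ) → (Fin d → ℝ))
    (hI1 : Integrable (fun p : Omega8 d => lcontN h (XP8 δ p) (XPP8 δ p) (XM8 δ p))
      (prodD (ENNReal.ofReal p1 • D1 + ENNReal.ofReal (1 - p1) • D0)
        (ENNReal.ofReal p1 • D1 + ENNReal.ofReal (1 - p1) • D0) Dxt Da))
    (hI2 : Integrable (fun p : Omega8 d => clsN h 1 (XP8 δ p) (XPP8 δ p) (XM8 δ p))
      (prodD D1 D0 Dxt Da))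
    (hI3 : Integrable (fun p : Omega8 d => clsN h 0 (XP8 δ p) (XPP8 δ p) (XM8 δ p))
      (prodD D0 D1 Dxt Da))
    (hI4 : Integrable (fun p : Omega8 d => etermN h (XP8 δ p) (XPP8 δ p) (XM8 δ p))
      (prodD D1 D1 Dxt Da))
    (hI5 : Integrable (fun p : Omega8 d => etermN h (XP8 δ p) (XPP8 δ p) (XM8 δ p))
      (prodD D0 D0 Dxt Da)) :
    ∫ p, lcontN h (XP8 δ p) (XPP8 δ p) (XM8 δ p)
        ∂(prodD (ENNReal.ofReal p1 • D1 + ENNReal.ofReal (1 - p1) • D0)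
          (ENNReal.ofReal p1 • D1 + ENNReal.ofReal (1 - p1) • D0) Dxt Da)
      = (p1 * (1 - p1) *
            ∫ p, clsN h 1 (XP8 δ p) (XPP8 δ p) (XM8 δ p) ∂(prodD D1 D0 Dxt Da)
          + (1 - p1) * p1 *
            ∫ p, clsN h 0 (XP8 δ p) (XPP8 δ p) (XM8 δ p) ∂(prodD D0 D1 Dxt Da))
        + (p1 * p1 *
            ∫ p, etermN h (XP8 δ p) (XPP8 δ p) (XM8 δ p) ∂(prodD D1 D1 Dxt Da)
          + (1 - p1) * (1 - p1) *
            ∫ p, etermN h (XP8 δ p) (XPP8 δ p) (XM8 δ p) ∂(prodD D0 D0 Dxt Da)) := by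
    classical
  set f : Omega8 d → ℝ := fun p => lcontN h (XP8 δ p) (XPP8 δ p) (XM8 δ p) with hf
  have hfc1 : (fun p : Omega8 d => clsN h 1 (XP8 δ p) (XPP8 δ p) (XM8 δ p)) = f :=
    funext fun p => cls_one_eq h _ _ _ hh
  have hfc0 : (fun p : Omega8 d => clsN h 0 (XP8 δ p) (XPP8 δ p) (XM8 δ p)) = f :=
    funext fun p => cls_zero_eq h _ _ _ hh
  have hfe : (fun p : Omega8 d => etermN h (XP8 δ p) (XPP8 δ p) (XM8 δ p)) = f :=
    funext fun p => eterm_eq h _ _ _ hh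
  rw [hfc1] at hI2 ⊢
  rw [hfc0] at hI3 ⊢
  rw [hfe] at hI4 hI5 ⊢
  set c1 := ENNReal.ofReal p1 with hc1
  set c0 := ENNReal.ofReal (1 - p1) with hc0
  have hc1t : c1 ≠ ⊤ := ENNReal.ofReal_ne_top
  have hc0t : c0 ≠ ⊤ := ENNReal.ofReal_ne_top
  have hdec : prodD (c1 • D1 + c0 • D0) (c1 • D1 + c0 • D0) Dxt Da
      = c1 • (c1 • prodD D1 D1 Dxt Da + c0 • prodD D0 D1 Dxt Da)
        + c0 • (c1 • prodD D1 D0 Dxt Da + c0 • prodD D0 D0 Dxt Da) := by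
    unfold prodD
    set_option synthInstance.maxSize 1000 in
    simp only [Measure.add_prod, Measure.prod_add, smul_prod', prod_smul', smul_add]
  have I11 : Integrable f (prodD D1 D1 Dxt Da) := hI4
  have I10 : Integrable f (prodD D1 D0 Dxt Da) := hI2
  have I01 : Integrable f (prodD D0 D1 Dxt Da) := hI3
  have I00 : Integrable f (prodD D0 D0 Dxt Da) := hI5
  have hA : Integrable f (c1 • (c1 • prodD D1 D1 Dxt Da + c0 • prodD D0 D1 Dxt Da)) :=
    ((I11.smul_measure hc1t).add_measure (I01.smul_measure hc0t)).smul_measure hc1t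
  have hB : Integrable f (c0 • (c1 • prodD D1 D0 Dxt Da + c0 • prodD D0 D0 Dxt Da)) :=
    ((I10.smul_measure hc1t).add_measure (I00.smul_measure hc0t)).smul_measure hc0t
  rw [hdec, integral_add_measure hA hB, integral_smul_measure, integral_smul_measure,
    integral_add_measure (I11.smul_measure hc1t) (I01.smul_measure hc0t),
    integral_add_measure (I10.smul_measure hc1t) (I00.smul_measure hc0t),
    integral_smul_measure, integral_smul_measure, integral_smul_measure, integral_smul_measure]
  have t1 : c1.toReal = p1 := ENNReal.toReal_ofReal hp0.le
  have t0 : c0.toReal = 1 - p1 := ENNReal.toReal_ofReal (by linarith)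
  rw [t1, t0]
  simp only [smul_eq_mul]
  ring
end

section
/- (Gaussian-noise regularization identity, linear model.) Let y ∈ {0,1}, w ∈ ℝ^d, x ∈ ℝ^d, σ > 0, and let x̃ ∼ N(0, σ²·I_d) be a standard isotropic Gaussian random vector scaled by σ. For α > 0 set x⁺ := x + α·x̃. Then E_{x̃}[ ℓ(wᵀx⁺, y) ] = ℓ(wᵀx, y) + σ²·(α²/2)·ψ'(wᵀx)·‖w‖² + r(α), where ψ'(q) = ψ(q)(1−ψ(q)) and there exists a constant C (depending only on σ and ‖w‖) such that |r(α)| ≤ C·α³ for all α > 0. -/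
open MeasureTheory ProbabilityTheory

/-- The logistic function `ψ(q) = exp(q)/(1+exp(q))`. -/
noncomputable def psi (q : ℝ) : ℝ := Real.exp q / (1 + Real.exp q)

section GNRAux
open Real
open scoped NNReal ENNReal

noncomputable def lgf (t : ℝ) : ℝ := Real.log (1 + Real.exp t)
noncomputable def psi2 (t : ℝ) : ℝ := Real.exp t / (1 + Real.exp t) ^ 2
noncomputable def psi3 (t : ℝ) : ℝ := Real.exp t * (1 - Real.exp t) / (1 + Real.exp t) ^ 3

lemma one_add_exp_pos (t : ℝ) : 0 < 1 + Real.exp t := by positivity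

lemma bce_eq (t y : ℝ) : bce t y = lgf t - y * t := by
  have h1 : (0:ℝ) < 1 + Real.exp (-t) := one_add_exp_pos _
  have h2 : 1 - 1 / (1 + Real.exp (-t)) = Real.exp (-t) / (1 + Real.exp (-t)) := by
    field_simp
    ring
  have h3 : Real.log (1 + Real.exp (-t)) = lgf t - t := by
    have : 1 + Real.exp (-t) = (1 + Real.exp t) * Real.exp (-t) := by
      rw [Real.exp_neg]
      have := Real.exp_pos t
      field_simp
      ring
    rw [this, Real.log_mul (by positivity) (Real.exp_ne_zero _), Real.log_exp, lgf]
    ring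
  rw [bce, h2, one_div, Real.log_inv, Real.log_div (Real.exp_ne_zero _) (ne_of_gt h1),
    Real.log_exp, h3]
  ring

lemma hasDerivAt_lgf (t : ℝ) : HasDerivAt lgf (psi t) t := by
  have := ((Real.hasDerivAt_exp t).const_add 1).log (ne_of_gt (one_add_exp_pos t))
  rw [show lgf = fun t => Real.log (1 + Real.exp t) from rfl]
  simpa [lgf, psi, div_eq_mul_inv, mul_comm] using this

lemma hasDerivAt_psi (t : ℝ) : HasDerivAt psi (psi2 t) t := by
  have h := (Real.hasDerivAt_exp t).div ((Real.hasDerivAt_exp t).const_add 1)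
    (ne_of_gt (one_add_exp_pos t))
  refine h.congr_deriv ?_
  have := one_add_exp_pos t
  rw [psi2]
  field_simp
  ring

lemma hasDerivAt_psi2 (t : ℝ) : HasDerivAt psi2 (psi3 t) t := by
  have hd : HasDerivAt (fun t => (1 + Real.exp t) ^ 2) (2 * (1 + Real.exp t) * Real.exp t) t := by
    have := (((Real.hasDerivAt_exp t).const_add 1).pow 2)
    simp at this
    exact this
  have h := (Real.hasDerivAt_exp t).div hd (by positivity)
  refine h.congr_deriv ?_
  have := one_add_exp_pos t
  rw [psi3]
  field_simp
  ring

lemma abs_psi3_le (t : ℝ) : |psi3 t| ≤ 1 := by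
  have he := Real.exp_pos t
  have h1 := one_add_exp_pos t
  rw [psi3, abs_div, abs_mul, abs_of_pos he, abs_of_pos (pow_pos h1 3)]
  rw [div_le_one (by positivity)]
  have h2 : |1 - Real.exp t| ≤ 1 + Real.exp t := by
    rw [abs_le]; constructor <;> nlinarith
  calc Real.exp t * |1 - Real.exp t| ≤ (1 + Real.exp t)^2 * (1 + Real.exp t) := by
        apply mul_le_mul _ h2 (abs_nonneg _) (by positivity)
        nlinarith
    _ = (1 + Real.exp t) ^ 3 := by ring

lemma continuous_psi : Continuous psi :=
  Real.continuous_exp.div (continuous_const.add Real.continuous_exp)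
    (fun t => ne_of_gt (one_add_exp_pos t))

lemma continuous_psi2 : Continuous psi2 :=
  Real.continuous_exp.div ((continuous_const.add Real.continuous_exp).pow 2)
    (fun t => by positivity)

lemma continuous_psi3 : Continuous psi3 :=
  (Real.continuous_exp.mul (continuous_const.sub Real.continuous_exp)).div
    ((continuous_const.add Real.continuous_exp).pow 3) (fun t => by positivity)

/-- Generic: if `g 0 = 0` and `|g'| ≤ M |t|^k` then `|g u| ≤ M |u|^(k+1)/(k+1)`. -/
lemma key_bound (g g' : ℝ → ℝ) (hd : ∀ t, HasDerivAt g (g' t) t) (hc : Continuous g')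
    (h0 : g 0 = 0) (M : ℝ) (k : ℕ) (hb : ∀ t, |g' t| ≤ M * |t| ^ k) (u : ℝ) :
    |g u| ≤ M * |u| ^ (k + 1) / (k + 1) := by
  have ftc : ∫ t in (0:ℝ)..u, g' t = g u - g 0 :=
    intervalIntegral.integral_eq_sub_of_hasDerivAt (fun t _ => hd t)
      (hc.intervalIntegrable 0 u)
  rw [h0, sub_zero] at ftc
  rw [← ftc]
  rcases le_total 0 u with hu | hu
  · have h1 : |∫ t in (0:ℝ)..u, g' t| ≤ ∫ t in (0:ℝ)..u, |g' t| :=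
      intervalIntegral.abs_integral_le_integral_abs hu
    have h2 : (∫ t in (0:ℝ)..u, |g' t|) ≤ ∫ t in (0:ℝ)..u, M * t ^ k := by
      apply intervalIntegral.integral_mono_on hu
        (hc.abs.intervalIntegrable 0 u)
        ((continuous_const.mul (continuous_pow k)).intervalIntegrable 0 u)
      intro t ht
      calc |g' t| ≤ M * |t| ^ k := hb t
        _ = M * t ^ k := by rw [abs_of_nonneg ht.1]
    have h3 : (∫ t in (0:ℝ)..u, M * t ^ k) = M * u ^ (k+1) / (k+1) := by
      rw [intervalIntegral.integral_const_mul, integral_pow]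
      push_cast
      ring
    rw [abs_of_nonneg hu]
    calc |∫ t in (0:ℝ)..u, g' t| ≤ _ := h1
      _ ≤ _ := h2
      _ = _ := h3
  · have hsymm : |∫ t in (0:ℝ)..u, g' t| = |∫ t in u..(0:ℝ), g' t| := by
      rw [intervalIntegral.integral_symm, abs_neg]
    have h1 : |∫ t in u..(0:ℝ), g' t| ≤ ∫ t in u..(0:ℝ), |g' t| :=
      intervalIntegral.abs_integral_le_integral_abs hu
    have h2 : (∫ t in u..(0:ℝ), |g' t|) ≤ ∫ t in u..(0:ℝ), M * (-t) ^ k := by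
      apply intervalIntegral.integral_mono_on hu
        (hc.abs.intervalIntegrable u 0)
        ((continuous_const.mul ((continuous_neg).pow k)).intervalIntegrable u 0)
      intro t ht
      calc |g' t| ≤ M * |t| ^ k := hb t
        _ = M * (-t) ^ k := by rw [abs_of_nonpos ht.2]
    have h3 : (∫ t in u..(0:ℝ), M * (-t) ^ k) = M * (-u) ^ (k+1) / (k+1) := by
      rw [intervalIntegral.integral_const_mul]
      have := intervalIntegral.integral_comp_neg (a := u) (b := 0) (fun t => t ^ k)
      rw [this, neg_zero, integral_pow]
      push_cast
      ring
    rw [abs_of_nonpos hu]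
    calc |∫ t in (0:ℝ)..u, g' t| = _ := hsymm
      _ ≤ _ := h1
      _ ≤ _ := h2
      _ = M * (-u) ^ (k+1) / (k+1) := h3

lemma hasDerivAt_shift (f f' : ℝ → ℝ) (hf : ∀ t, HasDerivAt f (f' t) t) (q t : ℝ) :
    HasDerivAt (fun u => f (q + u)) (f' (q + t)) t := by
  simpa [Function.comp_def] using (hf (q + t)).comp t ((hasDerivAt_id t).const_add q)

lemma step1 (q t : ℝ) : |psi2 (q + t) - psi2 q| ≤ |t| := by
  have h := key_bound (fun u => psi2 (q + u) - psi2 q) (fun u => psi3 (q + u))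
    (fun t => ((hasDerivAt_shift psi2 psi3 hasDerivAt_psi2 q t).sub_const (psi2 q)))
    (continuous_psi3.comp (continuous_const.add continuous_id)) (by simp) 1 0
    (fun t => by simpa using abs_psi3_le (q + t)) t
  simpa using h

lemma step2 (q t : ℝ) : |psi (q + t) - psi q - t * psi2 q| ≤ |t| ^ 2 / 2 := by
  have hd : ∀ t : ℝ, HasDerivAt (fun u => psi (q + u) - psi q - u * psi2 q)
      (psi2 (q + t) - psi2 q) t := by
    intro t
    have h1 := (hasDerivAt_shift psi psi2 hasDerivAt_psi q t).sub_const (psi q)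
    have h2 : HasDerivAt (fun u : ℝ => u * psi2 q) (psi2 q) t := by
      simpa using (hasDerivAt_id t).mul_const (psi2 q)
    exact h1.sub h2
  have h := key_bound _ _ hd
    ((continuous_psi2.comp (continuous_const.add continuous_id)).sub continuous_const)
    (by simp) 1 1 (fun t => by simpa using step1 q t) t
  norm_num at h
  linarith [sq_abs t, h]
lemma taylor_lgf (q u : ℝ) :
    |lgf (q + u) - lgf q - u * psi q - u ^ 2 / 2 * psi2 q| ≤ |u| ^ 3 / 6 := by
  have hd : ∀ t : ℝ, HasDerivAt (fun u => lgf (q + u) - lgf q - u * psi q - u ^ 2 / 2 * psi2 q)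
      (psi (q + t) - psi q - t * psi2 q) t := by
    intro t
    have h1 := (hasDerivAt_shift lgf psi hasDerivAt_lgf q t).sub_const (lgf q)
    have h2 : HasDerivAt (fun u : ℝ => u * psi q) (psi q) t := by
      simpa using (hasDerivAt_id t).mul_const (psi q)
    have h3 : HasDerivAt (fun u : ℝ => u ^ 2 / 2 * psi2 q) (t * psi2 q) t := by
      have := ((hasDerivAt_pow 2 t).div_const 2).mul_const (psi2 q)
      refine this.congr_deriv ?_
      push_cast
      ring
    exact (h1.sub h2).sub h3
  have h := key_bound _ _ hd
    (((continuous_psi.comp (continuous_const.add continuous_id)).sub continuous_const).sub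
      (continuous_id.mul continuous_const))
    (by simp) (1/2) 2 (fun t => by have := step2 q t; norm_num; linarith [sq_abs t, this]) u
  norm_num at h
  linarith

section Gauss
variable {σ : ℝ} (hσ : 0 < σ)

lemma vne (hσ : 0 < σ) : (σ ^ 2).toNNReal ≠ 0 := by
  simp [Real.toNNReal_eq_zero, not_le]
  positivity

lemma vcoe (hσ : 0 < σ) : (((σ ^ 2).toNNReal : ℝ≥0) : ℝ) = σ ^ 2 :=
  Real.coe_toNNReal _ (sq_nonneg σ)

lemma gauss_integral_eq (hσ : 0 < σ) (g : ℝ → ℝ) :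
    ∫ x, g x ∂(gaussianReal 0 (σ ^ 2).toNNReal)
      = ∫ x, gaussianPDFReal 0 (σ ^ 2).toNNReal x * g x := by
  rw [gaussianReal_of_var_ne_zero _ (vne hσ)]
  have : (gaussianPDF 0 (σ ^ 2).toNNReal)
      = fun x => ((gaussianPDFReal 0 (σ ^ 2).toNNReal x).toNNReal : ℝ≥0∞) := by
    funext x; rfl
  rw [this, integral_withDensity_eq_integral_smul (μ := volume)
    (f := fun x => (gaussianPDFReal 0 (σ ^ 2).toNNReal x).toNNReal)
    (measurable_real_toNNReal.comp (measurable_gaussianPDFReal _ _)) g]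
  congr 1
  funext x
  simp only [NNReal.smul_def, smul_eq_mul, Function.comp]
  rw [Real.coe_toNNReal _ (gaussianPDFReal_nonneg _ _ x)]

lemma gauss_integrable_iff (hσ : 0 < σ) (g : ℝ → ℝ) :
    Integrable g (gaussianReal 0 (σ ^ 2).toNNReal)
      ↔ Integrable (fun x => g x * gaussianPDFReal 0 (σ ^ 2).toNNReal x) volume := by
  rw [gaussianReal_of_var_ne_zero _ (vne hσ), integrable_withDensity_iff
    (measurable_gaussianPDF _ _) (Filter.Eventually.of_forall fun x => ENNReal.ofReal_lt_top)]
  apply integrable_congr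
  filter_upwards with x
  rw [gaussianPDF, ENNReal.toReal_ofReal (gaussianPDFReal_nonneg _ _ x)]

lemma pdf_even (hσ : 0 < σ) (x : ℝ) :
    gaussianPDFReal 0 (σ ^ 2).toNNReal (-x) = gaussianPDFReal 0 (σ ^ 2).toNNReal x := by
  simp [gaussianPDFReal, neg_sq]

lemma gauss_mean (hσ : 0 < σ) : ∫ x, x ∂(gaussianReal 0 (σ ^ 2).toNNReal) = 0 := by
  rw [gauss_integral_eq hσ]
  set f : ℝ → ℝ := fun x => gaussianPDFReal 0 (σ ^ 2).toNNReal x * x with hf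
  have hodd : ∀ x, f (-x) = - f x := by
    intro x; simp [hf, pdf_even hσ]
  have h2 : ∫ x, f x = ∫ x, f (-x) := (integral_neg_eq_self f volume).symm
  have h3 : ∫ x, f (-x) = - ∫ x, f x := by
    simp_rw [hodd]; exact integral_neg f
  linarith [h2, h3]

lemma gauss_pdf_expand (hσ : 0 < σ) (x : ℝ) :
    gaussianPDFReal 0 (σ ^ 2).toNNReal x
      = (Real.sqrt (2 * π * σ ^ 2))⁻¹ * Real.exp (-(2 * σ ^ 2)⁻¹ * x ^ 2) := by
  have h : -(x - 0) ^ 2 / (2 * σ ^ 2) = -(2 * σ ^ 2)⁻¹ * x ^ 2 := by ring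
  rw [gaussianPDFReal, vcoe hσ, h]

lemma gauss_sq_integral_aux (hσ : 0 < σ) :
    ∫ x : ℝ, x ^ 2 * Real.exp (-(2 * σ ^ 2)⁻¹ * x ^ 2)
      = (2 * σ ^ 2) ^ ((3:ℝ)/2) * (1 / 2) * Real.sqrt π := by
  have hb : (0:ℝ) < (2 * σ ^ 2)⁻¹ := by positivity
  have h1 : ∫ x : ℝ, x ^ 2 * Real.exp (-(2 * σ ^ 2)⁻¹ * x ^ 2)
      = 2 * ∫ x in Set.Ioi (0:ℝ), x ^ 2 * Real.exp (-(2 * σ ^ 2)⁻¹ * x ^ 2) := by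
    rw [← integral_comp_abs (f := fun x => x ^ 2 * Real.exp (-(2 * σ ^ 2)⁻¹ * x ^ 2))]
    congr 1; funext x; rw [sq_abs]
  have h2 : ∫ x in Set.Ioi (0:ℝ), x ^ 2 * Real.exp (-(2 * σ ^ 2)⁻¹ * x ^ 2)
      = ((2 * σ ^ 2)⁻¹) ^ (-(((2:ℝ)) + 1) / 2) * (1 / 2) * Real.Gamma (((2:ℝ) + 1) / 2) := by
    rw [← integral_rpow_mul_exp_neg_mul_rpow (by norm_num : (0:ℝ) < 2) (by norm_num : (-1:ℝ) < 2) hb]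
    apply setIntegral_congr_fun measurableSet_Ioi
    intro x hx
    simp only [← Real.rpow_natCast x]
    norm_num
  have hgamma : Real.Gamma (((2:ℝ) + 1) / 2) = Real.sqrt π / 2 := by
    have : ((2:ℝ) + 1) / 2 = 1/2 + 1 := by norm_num
    rw [this, Real.Gamma_add_one (by norm_num), Real.Gamma_one_half_eq]
    ring
  have hbpow : ((2 * σ ^ 2)⁻¹ : ℝ) ^ (-(((2:ℝ)) + 1) / 2) = (2 * σ ^ 2) ^ ((3:ℝ)/2) := by
    rw [← Real.rpow_neg_one (2 * σ ^ 2), ← Real.rpow_natCast]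
    rw [← Real.rpow_mul (by positivity)]
    norm_num
  rw [h1, h2, hgamma, hbpow]
  ring

lemma gauss_second_moment (hσ : 0 < σ) :
    ∫ x, x ^ 2 ∂(gaussianReal 0 (σ ^ 2).toNNReal) = σ ^ 2 := by
  rw [gauss_integral_eq hσ]
  have : ∀ x : ℝ, gaussianPDFReal 0 (σ ^ 2).toNNReal x * x ^ 2
      = (Real.sqrt (2 * π * σ ^ 2))⁻¹ * (x ^ 2 * Real.exp (-(2 * σ ^ 2)⁻¹ * x ^ 2)) := by
    intro x; rw [gauss_pdf_expand hσ]; ring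
  simp_rw [this]
  rw [integral_const_mul, gauss_sq_integral_aux hσ]
  have hs : Real.sqrt (2 * π * σ ^ 2) = Real.sqrt π * Real.sqrt (2 * σ ^ 2) := by
    rw [← Real.sqrt_mul pi_pos.le]
    congr 1; ring
  have hpow : ((2 * σ ^ 2) : ℝ) ^ ((3:ℝ)/2) = (2 * σ ^ 2) * Real.sqrt (2 * σ ^ 2) := by
    rw [Real.sqrt_eq_rpow, ← Real.rpow_one_add' (by positivity) (by norm_num)]
    norm_num
  rw [hs, hpow]
  have h1 : Real.sqrt (2 * σ ^ 2) > 0 := Real.sqrt_pos.mpr (by positivity)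
  have h2 : Real.sqrt π > 0 := Real.sqrt_pos.mpr pi_pos
  field_simp

lemma gauss_abs3_integrable (hσ : 0 < σ) :
    Integrable (fun x : ℝ => |x| ^ 3) (gaussianReal 0 (σ ^ 2).toNNReal) := by
  rw [gauss_integrable_iff hσ]
  have hb : (0:ℝ) < (2 * σ ^ 2)⁻¹ := by positivity
  have base := (integrable_rpow_mul_exp_neg_mul_sq hb (by norm_num : (-1:ℝ) < 3)).abs
  have base2 : Integrable (fun x : ℝ => |x| ^ 3 * Real.exp (-(2 * σ ^ 2)⁻¹ * x ^ 2)) volume := by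
    apply base.congr
    filter_upwards with x
    rw [show ((3:ℝ)) = ((3:ℕ):ℝ) by norm_num, Real.rpow_natCast, abs_mul, abs_pow,
      abs_of_pos (Real.exp_pos _)]
  have := base2.const_mul (Real.sqrt (2 * π * σ ^ 2))⁻¹
  apply this.congr
  filter_upwards with x
  rw [gauss_pdf_expand hσ]
  ring
end Gauss

section Prod
variable {d : ℕ} {σ : ℝ} (hσ : 0 < σ)

lemma map_eval (i : Fin d) :
    MeasurePreserving (fun z : Fin d → ℝ => z i)
      (Measure.pi fun _ : Fin d => gaussianReal 0 (σ ^ 2).toNNReal)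
      (gaussianReal 0 (σ ^ 2).toNNReal) := by
  refine ⟨measurable_pi_apply i, ?_⟩
  ext s hs
  rw [Measure.map_apply (measurable_pi_apply i) hs]
  have hpre : (fun z : Fin d → ℝ => z i) ⁻¹' s
      = Set.pi Set.univ (Function.update (fun _ : Fin d => (Set.univ : Set ℝ)) i s) :=
    Set.eval_preimage
  rw [hpre, Measure.pi_pi,
    Finset.prod_eq_single_of_mem i (Finset.mem_univ i)
      (fun k _ hk => by rw [Function.update_of_ne hk]; simp),
    Function.update_self]

lemma memLp_id3 (hσ : 0 < σ) : MemLp (id : ℝ → ℝ) 3 (gaussianReal 0 (σ ^ 2).toNNReal) := by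
  rw [← memLp_norm_rpow_iff (q := 3) aestronglyMeasurable_id (by norm_num) (by norm_num),
    show (3:ℝ≥0∞)/3 = 1 from ENNReal.div_self (by norm_num) (by norm_num),
    memLp_one_iff_integrable]
  have := gauss_abs3_integrable hσ
  apply this.congr
  filter_upwards with x
  rw [Real.norm_eq_abs]
  rw [show ((3:ℝ≥0∞).toReal) = ((3:ℕ):ℝ) by norm_num, Real.rpow_natCast]
  simp

lemma memLp_coord (hσ : 0 < σ) (w : Fin d → ℝ) (i : Fin d) :
    MemLp (fun z : Fin d → ℝ => w i * z i) 3
      (Measure.pi fun _ : Fin d => gaussianReal 0 (σ ^ 2).toNNReal) := by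
  have h := ((memLp_id3 hσ).comp_measurePreserving (map_eval i)).const_mul (w i)
  simpa [Function.comp] using h

lemma memLp_S (hσ : 0 < σ) (w : Fin d → ℝ) :
    MemLp (fun z : Fin d → ℝ => ∑ i, w i * z i) 3
      (Measure.pi fun _ : Fin d => gaussianReal 0 (σ ^ 2).toNNReal) :=
  memLp_finset_sum _ fun i _ => memLp_coord hσ w i

lemma int_coord (hσ : 0 < σ) (i : Fin d) :
    ∫ z : Fin d → ℝ, z i ∂(Measure.pi fun _ : Fin d => gaussianReal 0 (σ ^ 2).toNNReal) = 0 := by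
  have h1 : ∫ z : Fin d → ℝ, z i ∂(Measure.pi fun _ : Fin d => gaussianReal 0 (σ ^ 2).toNNReal)
      = ∫ y : ℝ, y ∂((Measure.pi fun _ : Fin d => gaussianReal 0 (σ ^ 2).toNNReal).map
          (fun z : Fin d → ℝ => z i)) :=
    by simpa using (integral_map (φ := fun z : Fin d → ℝ => z i) (f := fun y : ℝ => y)
      (measurable_pi_apply i).aemeasurable aestronglyMeasurable_id).symm
  rw [h1, (map_eval (σ := σ) i).map_eq]
  exact gauss_mean hσ

lemma int_coord_sq (hσ : 0 < σ) (i : Fin d) :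
    ∫ z : Fin d → ℝ, z i ^ 2
      ∂(Measure.pi fun _ : Fin d => gaussianReal 0 (σ ^ 2).toNNReal) = σ ^ 2 := by
  have h1 : ∫ z : Fin d → ℝ, z i ^ 2
        ∂(Measure.pi fun _ : Fin d => gaussianReal 0 (σ ^ 2).toNNReal)
      = ∫ y : ℝ, y ^ 2 ∂((Measure.pi fun _ : Fin d => gaussianReal 0 (σ ^ 2).toNNReal).map
          (fun z : Fin d → ℝ => z i)) :=
    by simpa using (integral_map (φ := fun z : Fin d → ℝ => z i) (f := fun y : ℝ => y ^ 2)
      (measurable_pi_apply i).aemeasurable (continuous_pow 2).aestronglyMeasurable).symm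
  rw [h1, (map_eval (σ := σ) i).map_eq]
  exact gauss_second_moment hσ

lemma int_cross (hσ : 0 < σ) {i j : Fin d} (hij : i ≠ j) :
    ∫ z : Fin d → ℝ, z i * z j
      ∂(Measure.pi fun _ : Fin d => gaussianReal 0 (σ ^ 2).toNNReal) = 0 := by
  classical
  letI : MeasureSpace ℝ := ⟨gaussianReal 0 (σ ^ 2).toNNReal⟩
  haveI : SigmaFinite (volume : Measure ℝ) :=
    inferInstanceAs (SigmaFinite (gaussianReal 0 (σ ^ 2).toNNReal))
  have key := MeasureTheory.integral_fintype_prod_eq_prod (ι := Fin d) (E := fun _ => ℝ) (μ := fun _ => volume)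
    (f := fun k t => if k = i then t else if k = j then t else 1)
  have hfun : ∀ z : Fin d → ℝ,
      (∏ k, (if k = i then z k else if k = j then z k else 1)) = z i * z j := by
    intro z
    rw [← Finset.mul_prod_erase _ _ (Finset.mem_univ i), if_pos rfl,
      ← Finset.mul_prod_erase _ _ (Finset.mem_erase.mpr ⟨hij.symm, Finset.mem_univ j⟩),
      if_neg hij.symm, if_pos rfl]
    have hrest : (∏ k ∈ (Finset.univ.erase i).erase j,
        (if k = i then z k else if k = j then z k else 1)) = 1 := by
      apply Finset.prod_eq_one
      intro k hk
      simp only [Finset.mem_erase] at hk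
      rw [if_neg hk.2.1, if_neg hk.1]
    rw [hrest, mul_one]
  have hzero : (∏ k, ∫ t : ℝ, (if k = i then t else if k = j then t else 1)) = 0 := by
    apply Finset.prod_eq_zero (Finset.mem_univ i)
    simp only [if_pos rfl]
    exact gauss_mean hσ
  calc ∫ z : Fin d → ℝ, z i * z j
        ∂(Measure.pi fun _ : Fin d => gaussianReal 0 (σ ^ 2).toNNReal)
      = ∫ z : Fin d → ℝ, ∏ k, (if k = i then z k else if k = j then z k else 1) := by
        rw [show (volume : Measure (Fin d → ℝ)) = Measure.pi fun _ => volume from volume_pi]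
        exact (integral_congr_ae (Filter.Eventually.of_forall fun z => (hfun z).symm))
    _ = 0 := by
      rw [show (volume : Measure (Fin d → ℝ)) = Measure.pi fun _ => volume from volume_pi, key]
      exact hzero
end Prod

lemma psi2_eq (q : ℝ) : psi2 q = psi q * (1 - psi q) := by
  have h := one_add_exp_pos q
  rw [psi, psi2]
  field_simp
  ring

lemma continuous_lgf : Continuous lgf :=
  (continuous_const.add Real.continuous_exp).log fun t => ne_of_gt (one_add_exp_pos t)

lemma lgf_nonneg (t : ℝ) : 0 ≤ lgf t :=
  Real.log_nonneg (by linarith [Real.exp_pos t])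

lemma lgf_le (t : ℝ) : lgf t ≤ Real.log 2 + |t| := by
  have h1 : (1:ℝ) + Real.exp t ≤ 2 * Real.exp |t| := by
    have h2 : Real.exp t ≤ Real.exp |t| := Real.exp_le_exp.mpr (le_abs_self t)
    have h3 : (1:ℝ) ≤ Real.exp |t| := Real.one_le_exp (abs_nonneg t)
    linarith
  calc lgf t ≤ Real.log (2 * Real.exp |t|) :=
        Real.log_le_log (one_add_exp_pos t) h1
    _ = Real.log 2 + |t| := by
        rw [Real.log_mul (by norm_num) (Real.exp_ne_zero _), Real.log_exp]

lemma bce_abs_le (t y : ℝ) : |bce t y| ≤ Real.log 2 + (1 + |y|) * |t| := by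
  rw [bce_eq]
  calc |lgf t - y * t| ≤ |lgf t| + |y * t| := abs_sub _ _
    _ = lgf t + |y| * |t| := by rw [abs_of_nonneg (lgf_nonneg t), abs_mul]
    _ ≤ (Real.log 2 + |t|) + |y| * |t| := by linarith [lgf_le t]
    _ = Real.log 2 + (1 + |y|) * |t| := by ring


/-- Gaussian-noise regularization identity for a linear model (Theorem 2(ii)).  With
`x̃ ∼ N(0, σ²·I_d)` (an i.i.d. vector of `N(0,σ²)` coordinates) and `x⁺ := x + α·x̃`,
`E[ℓ(wᵀx⁺, y)] = ℓ(wᵀx, y) + σ²·(α²/2)·ψ'(wᵀx)·‖w‖² + r(α)` where `ψ'(q) = ψ(q)(1−ψ(q))`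
and `|r(α)| ≤ C·α³` for all `α > 0`, for some constant `C`. -/
theorem stmt10 {d : ℕ} (y : ℝ) (hy : y = 0 ∨ y = 1)
    (w x : Fin d → ℝ) (σ : ℝ) (hσ : 0 < σ) :
    ∃ r : ℝ → ℝ,
      (∃ C : ℝ, ∀ a : ℝ, 0 < a → |r a| ≤ C * a ^ 3) ∧
      ∀ a : ℝ, 0 < a →
        ∫ z : Fin d → ℝ, bce (∑ i, w i * (x i + a * z i)) y
            ∂(Measure.pi fun _ : Fin d => gaussianReal 0 (σ ^ 2).toNNReal)
          = bce (∑ i, w i * x i) y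
            + σ ^ 2 * (a ^ 2 / 2) *
                (psi (∑ i, w i * x i) * (1 - psi (∑ i, w i * x i))) * (∑ i, w i ^ 2)
            + r a := by
  classical
  set μ := Measure.pi fun _ : Fin d => gaussianReal 0 (σ ^ 2).toNNReal with hμ
  set q := ∑ i, w i * x i with hq
  set S : (Fin d → ℝ) → ℝ := fun z => ∑ i, w i * z i with hSdef
  have hSmeas : Measurable S :=
    Finset.measurable_sum _ fun i _ => (measurable_pi_apply (X := fun _ => ℝ) i).const_mul (w i)
  have hmem : MemLp S 3 μ := memLp_S hσ w
  have hS1 : Integrable S μ := hmem.integrable (by norm_num)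
  have hSsq : Integrable (fun z => S z ^ 2) μ :=
    (hmem.mono_exponent (by norm_num)).integrable_sq
  have hS3 : Integrable (fun z => |S z| ^ 3) μ := by
    have h := hmem.integrable_norm_rpow (by norm_num) (by norm_num)
    apply h.congr
    filter_upwards with z
    rw [Real.norm_eq_abs, show ((3:ℝ≥0∞).toReal) = ((3:ℕ):ℝ) by norm_num, Real.rpow_natCast]
  have hintS : ∫ z, S z ∂μ = 0 := by
    rw [hSdef]
    rw [integral_finset_sum _ fun i _ => (memLp_coord hσ w i).integrable (by norm_num)]
    refine Finset.sum_eq_zero fun i _ => ?_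
    rw [integral_const_mul, int_coord hσ i, mul_zero]
  have hci : ∀ i : Fin d, Integrable (fun z : Fin d → ℝ => z i ^ 2) μ := by
    intro i
    have h := (((memLp_id3 hσ).comp_measurePreserving (map_eval i)).mono_exponent
      (by norm_num : (2:ℝ≥0∞) ≤ 3)).integrable_sq
    simpa [Function.comp] using h
  have hprod_int : ∀ i j : Fin d,
      Integrable (fun z : Fin d → ℝ => (w i * w j) * (z i * z j)) μ := by
    intro i j
    apply Integrable.const_mul
    apply Integrable.mono' (((hci i).add (hci j)).const_mul (1/2))
      (((measurable_pi_apply i).mul (measurable_pi_apply j)).aestronglyMeasurable)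
    filter_upwards with z
    simp only [Pi.add_apply, Pi.mul_apply]
    rw [Real.norm_eq_abs, abs_mul]
    nlinarith [sq_nonneg (|z i| - |z j|), sq_abs (z i), sq_abs (z j),
      abs_nonneg (z i), abs_nonneg (z j)]
  have hval : ∀ i j : Fin d,
      ∫ z : Fin d → ℝ, z i * z j ∂μ = if i = j then σ ^ 2 else 0 := by
    intro i j
    by_cases h : i = j
    · subst h
      rw [if_pos rfl, ← int_coord_sq hσ i]
      apply integral_congr_ae
      filter_upwards with z
      ring
    · rw [if_neg h]
      exact int_cross hσ h
  have hintSsq : ∫ z, S z ^ 2 ∂μ = σ ^ 2 * ∑ i, w i ^ 2 := by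
    have hexp : (fun z : Fin d → ℝ => S z ^ 2)
        = fun z => ∑ i, ∑ j, (w i * w j) * (z i * z j) := by
      funext z
      rw [hSdef, sq, Finset.sum_mul_sum]
      exact Finset.sum_congr rfl fun i _ => Finset.sum_congr rfl fun j _ => by ring
    rw [hexp, integral_finset_sum _ fun i _ => integrable_finset_sum _ fun j _ => hprod_int i j]
    have : ∀ i : Fin d, ∫ z, (∑ j, (w i * w j) * (z i * z j)) ∂μ
        = ∑ j, (w i * w j) * (if i = j then σ ^ 2 else 0) := by
      intro i
      rw [integral_finset_sum _ fun j _ => hprod_int i j]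
      exact Finset.sum_congr rfl fun j _ => by rw [integral_const_mul, hval i j]
    simp_rw [this]
    simp only [mul_ite, mul_zero, Finset.sum_ite_eq, Finset.mem_univ, if_true]
    rw [Finset.mul_sum]
    exact Finset.sum_congr rfl fun i _ => by ring
  have hcont_bce : Continuous (fun t => bce t y) := by
    have : (fun t => bce t y) = fun t => lgf t - y * t := funext fun t => bce_eq t y
    rw [this]
    exact continuous_lgf.sub (continuous_const.mul continuous_id)
  refine ⟨fun a => (∫ z : Fin d → ℝ, bce (∑ i, w i * (x i + a * z i)) y ∂μ)
      - bce q y - σ ^ 2 * (a ^ 2 / 2) * (psi q * (1 - psi q)) * (∑ i, w i ^ 2),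
    ⟨(∫ z, |S z| ^ 3 ∂μ) / 6, ?_⟩, fun a ha => by ring⟩
  intro a ha
  have hsplit : ∀ z : Fin d → ℝ, ∑ i, w i * (x i + a * z i) = q + a * S z := by
    intro z
    rw [hq, hSdef, Finset.mul_sum, ← Finset.sum_add_distrib]
    exact Finset.sum_congr rfl fun i _ => by ring
  set c1 := a * psi q - a * y with hc1
  set c2 := a ^ 2 * psi2 q / 2 with hc2
  set R : (Fin d → ℝ) → ℝ :=
    fun z => bce (q + a * S z) y - bce q y - c1 * S z - c2 * S z ^ 2 with hRdef
  have hg_int : Integrable (fun z => bce (q + a * S z) y) μ := by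
    apply Integrable.mono'
      ((integrable_const (Real.log 2 + (1 + |y|) * |q|)).add
        ((hS1.abs).const_mul ((1 + |y|) * a)))
      ((hcont_bce.measurable.comp ((hSmeas.const_mul a).const_add q)).aestronglyMeasurable)
    filter_upwards with z
    rw [Real.norm_eq_abs]
    have h1 := bce_abs_le (q + a * S z) y
    have h2 : |q + a * S z| ≤ |q| + a * |S z| := by
      calc |q + a * S z| ≤ |q| + |a * S z| := abs_add_le _ _
        _ = |q| + a * |S z| := by rw [abs_mul, abs_of_pos ha]
    have h3 : (0:ℝ) ≤ 1 + |y| := by positivity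
    calc |bce (q + a * S z) y| ≤ Real.log 2 + (1 + |y|) * |q + a * S z| := h1
      _ ≤ Real.log 2 + (1 + |y|) * (|q| + a * |S z|) := by nlinarith
      _ = Real.log 2 + (1 + |y|) * |q| + (1 + |y|) * a * |S z| := by ring
  have hR_int : Integrable R μ := by
    rw [hRdef]
    exact ((hg_int.sub (integrable_const _)).sub (hS1.const_mul c1)).sub (hSsq.const_mul c2)
  have hIg : ∫ z, bce (q + a * S z) y ∂μ
      = bce q y + c2 * (σ ^ 2 * ∑ i, w i ^ 2) + ∫ z, R z ∂μ := by
    have hfun : (fun z => bce (q + a * S z) y)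
        = fun z => bce q y + (c1 * S z + (c2 * S z ^ 2 + R z)) := by
      funext z
      rw [hRdef]
      ring
    have hA : Integrable (fun z => c1 * S z) μ := hS1.const_mul c1
    have hB : Integrable (fun z => c2 * S z ^ 2) μ := hSsq.const_mul c2
    have hBR : Integrable (fun z => c2 * S z ^ 2 + R z) μ := hB.add hR_int
    have hABR : Integrable (fun z => c1 * S z + (c2 * S z ^ 2 + R z)) μ := hA.add hBR
    rw [hfun, integral_add (integrable_const _) hABR, integral_add hA hBR,
      integral_add hB hR_int, integral_const_mul, integral_const_mul, hintS, hintSsq,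
      integral_const]
    simp only [measure_univ, probReal_univ, ENNReal.toReal_one, smul_eq_mul, one_mul, mul_zero, add_zero]
    ring
  have hIskew : ∫ z : Fin d → ℝ, bce (∑ i, w i * (x i + a * z i)) y ∂μ
      = ∫ z, bce (q + a * S z) y ∂μ := by
    apply integral_congr_ae
    filter_upwards with z
    rw [hsplit z]
  have hRbound : ∀ z : Fin d → ℝ, |R z| ≤ a ^ 3 / 6 * |S z| ^ 3 := by
    intro z
    have hRz : R z = lgf (q + a * S z) - lgf q - (a * S z) * psi q
        - (a * S z) ^ 2 / 2 * psi2 q := by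
      simp only [hRdef, bce_eq, hc1, hc2]
      ring
    rw [hRz]
    calc |lgf (q + a * S z) - lgf q - (a * S z) * psi q - (a * S z) ^ 2 / 2 * psi2 q|
        ≤ |a * S z| ^ 3 / 6 := taylor_lgf q (a * S z)
      _ = a ^ 3 / 6 * |S z| ^ 3 := by
          rw [abs_mul, abs_of_pos ha, mul_pow]
          ring
  have habs : |∫ z, R z ∂μ| ≤ (∫ z, |S z| ^ 3 ∂μ) / 6 * a ^ 3 := by
    calc |∫ z, R z ∂μ| ≤ ∫ z, |R z| ∂μ := by
          simpa [Real.norm_eq_abs] using norm_integral_le_integral_norm (μ := μ) R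
      _ ≤ ∫ z, a ^ 3 / 6 * |S z| ^ 3 ∂μ :=
          integral_mono hR_int.abs (hS3.const_mul _) fun z => hRbound z
      _ = (∫ z, |S z| ^ 3 ∂μ) / 6 * a ^ 3 := by
          rw [integral_const_mul]
          ring
  have hfinal : (∫ z : Fin d → ℝ, bce (∑ i, w i * (x i + a * z i)) y ∂μ)
      - bce q y - σ ^ 2 * (a ^ 2 / 2) * (psi q * (1 - psi q)) * (∑ i, w i ^ 2)
      = ∫ z, R z ∂μ := by
    rw [hIskew, hIg, hc2, psi2_eq]
    ring
  beta_reduce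
  rw [hfinal]
  exact habs

end GNRAux
end
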